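/- Let 1 ≥ p_1 ≥ p_2 ≥ ... ≥ p_D ≥ 0 and let 1 < d < D. Suppose ζ_i ∈ [0,1] with ζ_i < p_i for all i, Σ_{i=1}^d ζ_i = Σ_{j=d+1}^D ζ_j, and the modified probabilities p̃_i = p_i + ζ_i for i ≤ d and p̃_i = p_i − ζ_i for i > d all lie in [0,1]. Then Σ_{k=1}^D Π_{i=1}^k p̃_i ≥ Σ_{k=1}^D Π_{i=1}^k p_i. -/
import Mathlib
open Finset

/-- Telescoping product-difference identity. -/
lemma myProdDiff (a b : ℕ → ℝ) (n : ℕ) :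
    ∏ t ∈ range n, b t - ∏ t ∈ range n, a t
      = ∑ i ∈ range n, (b i - a i) * ((∏ t ∈ range i, b t) * ∏ t ∈ Ico (i+1) n, a t) := by
  induction n with
  | zero => simp
  | succ n ih =>
    rw [Finset.sum_range_succ, Finset.prod_range_succ, Finset.prod_range_succ]
    have h : ∀ i ∈ range n, (b i - a i) * ((∏ t ∈ range i, b t) * ∏ t ∈ Ico (i+1) (n+1), a t)
        = ((b i - a i) * ((∏ t ∈ range i, b t) * ∏ t ∈ Ico (i+1) n, a t)) * a n := by
      intro i hi
      rw [Finset.prod_Ico_succ_top (by simp at hi; omega : i+1 ≤ n)]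
      ring
    rw [Finset.sum_congr rfl h, ← Finset.sum_mul, ← ih]
    simp
    ring

lemma mySwap (f : ℕ → ℕ → ℝ) (n : ℕ) :
    ∑ k ∈ range n, ∑ i ∈ range (k+1), f i k = ∑ i ∈ range n, ∑ k ∈ Ico i n, f i k := by
  rw [Finset.sum_sigma', Finset.sum_sigma']
  apply Finset.sum_nbij' (fun x => ⟨x.2, x.1⟩) (fun x => ⟨x.2, x.1⟩) <;>
    simp <;> omega

noncomputable def Wfun (a b : ℕ → ℝ) (n i : ℕ) : ℝ :=
  ∑ k ∈ Ico i n, (∏ t ∈ range i, b t) * ∏ t ∈ Ico (i+1) (k+1), a t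

lemma W_anti (a b : ℕ → ℝ) (n : ℕ)
    (ha0 : ∀ t, t < n → 0 ≤ a t)
    (haA : ∀ s t, s ≤ t → t < n → a t ≤ a s)
    (hb0 : ∀ t, t < n → 0 ≤ b t) (hb1 : ∀ t, t < n → b t ≤ 1) :
    ∀ i j, i ≤ j → j ≤ n → Wfun a b n j ≤ Wfun a b n i := by
  intro i j hij hjn
  have hfact : ∀ m, Wfun a b n m
      = (∏ t ∈ range m, b t) * ∑ u ∈ range (n - m), ∏ s ∈ range u, a (m + 1 + s) := by
    intro m
    rw [Wfun, ← Finset.mul_sum, Finset.sum_Ico_eq_sum_range]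
    congr 1
    apply Finset.sum_congr rfl
    intro u hu
    rw [Finset.prod_Ico_eq_prod_range]
    have : m + u + 1 - (m + 1) = u := by omega
    rw [this]
  rw [hfact, hfact]
  have hBnn : (0:ℝ) ≤ ∏ t ∈ range i, b t :=
    Finset.prod_nonneg (fun t ht => hb0 t (by simp at ht; omega))
  have hB : ∏ t ∈ range j, b t ≤ ∏ t ∈ range i, b t := by
    obtain ⟨c, rfl⟩ := Nat.exists_eq_add_of_le hij
    rw [Finset.prod_range_add]
    calc (∏ t ∈ range i, b t) * ∏ x ∈ range c, b (i + x)
        ≤ (∏ t ∈ range i, b t) * 1 := by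
          apply mul_le_mul_of_nonneg_left _ hBnn
          apply Finset.prod_le_one
          · intro x hx; exact hb0 _ (by simp at hx; omega)
          · intro x hx; exact hb1 _ (by simp at hx; omega)
      _ = ∏ t ∈ range i, b t := mul_one _
  have hT : ∑ u ∈ range (n - j), ∏ s ∈ range u, a (j + 1 + s)
      ≤ ∑ u ∈ range (n - i), ∏ s ∈ range u, a (i + 1 + s) := by
    calc ∑ u ∈ range (n - j), ∏ s ∈ range u, a (j + 1 + s)
        ≤ ∑ u ∈ range (n - j), ∏ s ∈ range u, a (i + 1 + s) := by
          apply Finset.sum_le_sum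
          intro u hu
          simp at hu
          apply Finset.prod_le_prod
          · intro s hs; exact ha0 _ (by simp at hs; omega)
          · intro s hs; simp at hs; exact haA _ _ (by omega) (by omega)
      _ ≤ ∑ u ∈ range (n - i), ∏ s ∈ range u, a (i + 1 + s) := by
          apply Finset.sum_le_sum_of_subset_of_nonneg
          · exact Finset.range_subset_range.2 (by omega)
          · intro u hu _
            simp at hu
            exact Finset.prod_nonneg (fun s hs => ha0 _ (by simp at hs; omega))
  have hTnn : (0:ℝ) ≤ ∑ u ∈ range (n - j), ∏ s ∈ range u, a (j + 1 + s) := by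
    apply Finset.sum_nonneg
    intro u hu; simp at hu
    exact Finset.prod_nonneg (fun s hs => ha0 _ (by simp at hs; omega))
  have hBj : (0:ℝ) ≤ ∏ t ∈ range j, b t :=
    Finset.prod_nonneg (fun t ht => hb0 t (by simp at ht; omega))
  exact mul_le_mul hB hT hTnn hBnn
theorem stmt1 (D d : ℕ) (hd : 1 < d) (hdD : d < D) (p ζ ptilde : ℕ → ℝ)
    (hp1 : p 1 ≤ 1) (hpD : 0 ≤ p D)
    (hmono : ∀ i, 1 ≤ i → i < D → p (i + 1) ≤ p i)
    (hζ0 : ∀ i ∈ Finset.Icc 1 D, 0 ≤ ζ i)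
    (hζ1 : ∀ i ∈ Finset.Icc 1 D, ζ i ≤ 1)
    (hζp : ∀ i ∈ Finset.Icc 1 D, ζ i < p i)
    (hsum : ∑ i ∈ Finset.Icc 1 d, ζ i = ∑ j ∈ Finset.Icc (d + 1) D, ζ j)
    (hptA : ∀ i ∈ Finset.Icc 1 d, ptilde i = p i + ζ i)
    (hptB : ∀ i ∈ Finset.Icc (d + 1) D, ptilde i = p i - ζ i)
    (hpt0 : ∀ i ∈ Finset.Icc 1 D, 0 ≤ ptilde i)
    (hpt1 : ∀ i ∈ Finset.Icc 1 D, ptilde i ≤ 1) :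
    ∑ k ∈ Finset.Icc 1 D, ∏ i ∈ Finset.Icc 1 k, p i
      ≤ ∑ k ∈ Finset.Icc 1 D, ∏ i ∈ Finset.Icc 1 k, ptilde i := by
  -- antitonicity of p on [1, D]
  have hanti : ∀ b, b ≤ D → ∀ a, 1 ≤ a → a ≤ b → p b ≤ p a := by
    intro b
    induction b with
    | zero => intro _ a ha hab; omega
    | succ b ih =>
      intro hbD a ha hab
      rcases Nat.eq_or_lt_of_le hab with h | h
      · rw [h]
      · have hb1 : 1 ≤ b := by omega
        exact le_trans (hmono b hb1 (by omega)) (ih (by omega) a ha (by omega))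
  set q : ℕ → ℝ := fun t => p (1 + t) with hq
  set b : ℕ → ℝ := fun t => ptilde (1 + t) with hb
  have ha0 : ∀ t, t < D → 0 ≤ q t := fun t ht =>
    le_trans hpD (hanti D le_rfl (1 + t) (by omega) (by omega))
  have haA : ∀ s t, s ≤ t → t < D → q t ≤ q s := fun s t hst ht =>
    hanti (1 + t) (by omega) (1 + s) (by omega) (by omega)
  have hb0 : ∀ t, t < D → 0 ≤ b t := fun t ht =>
    hpt0 _ (Finset.mem_Icc.mpr ⟨by omega, by omega⟩)
  have hb1 : ∀ t, t < D → b t ≤ 1 := fun t ht =>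
    hpt1 _ (Finset.mem_Icc.mpr ⟨by omega, by omega⟩)
  -- rewrite goal in range form
  have hgoal : ∀ r : ℕ → ℝ, ∑ k ∈ Finset.Icc 1 D, ∏ i ∈ Finset.Icc 1 k, r i
      = ∑ k ∈ range D, ∏ t ∈ range (k + 1), r (1 + t) := by
    intro r
    rw [← Finset.Ico_add_one_right_eq_Icc, Finset.sum_Ico_eq_sum_range]
    have hD1 : D + 1 - 1 = D := by omega
    rw [hD1]
    apply Finset.sum_congr rfl
    intro k hk
    rw [← Finset.Ico_add_one_right_eq_Icc, Finset.prod_Ico_eq_prod_range]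
    have hk1 : 1 + k + 1 - 1 = k + 1 := by omega
    rw [hk1]
  rw [hgoal p, hgoal ptilde, ← sub_nonneg, ← Finset.sum_sub_distrib]
  have hid : ∀ k ∈ range D,
      (∏ t ∈ range (k+1), ptilde (1+t)) - ∏ t ∈ range (k+1), p (1+t)
        = ∑ i ∈ range (k+1), (b i - q i) * ((∏ t ∈ range i, b t) * ∏ t ∈ Ico (i+1) (k+1), q t) := by
    intro k _; exact myProdDiff q b (k+1)
  rw [Finset.sum_congr rfl hid,
    mySwap (fun i k => (b i - q i) * ((∏ t ∈ range i, b t) * ∏ t ∈ Ico (i+1) (k+1), q t)) D]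
  have hW : ∀ i ∈ range D,
      ∑ k ∈ Ico i D, (b i - q i) * ((∏ t ∈ range i, b t) * ∏ t ∈ Ico (i+1) (k+1), q t)
        = (b i - q i) * Wfun q b D i := by
    intro i _; rw [Wfun, Finset.mul_sum]
  rw [Finset.sum_congr rfl hW]
  -- split at d
  rw [Finset.range_eq_Ico, ← Finset.sum_Ico_consecutive _ (Nat.zero_le d) (le_of_lt hdD)]
  set c := Wfun q b D d with hc
  have hWanti := W_anti q b D ha0 haA hb0 hb1
  have hz1 : ∀ i, i < d → b i - q i = ζ (1 + i) := by
    intro i hi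
    show ptilde (1+i) - p (1+i) = ζ (1+i)
    rw [hptA _ (Finset.mem_Icc.mpr ⟨by omega, by omega⟩)]; ring
  have hz2 : ∀ i, d ≤ i → i < D → b i - q i = -ζ (1 + i) := by
    intro i hi1 hi2
    show ptilde (1+i) - p (1+i) = -ζ (1+i)
    rw [hptB _ (Finset.mem_Icc.mpr ⟨by omega, by omega⟩)]; ring
  have h1 : ∑ i ∈ Ico 0 d, (b i - q i) * c ≤ ∑ i ∈ Ico 0 d, (b i - q i) * Wfun q b D i := by
    apply Finset.sum_le_sum
    intro i hi
    rw [Finset.mem_Ico] at hi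
    have hζ : 0 ≤ b i - q i := by
      rw [hz1 i hi.2]; exact hζ0 _ (Finset.mem_Icc.mpr ⟨by omega, by omega⟩)
    exact mul_le_mul_of_nonneg_left (hWanti i d (by omega) (by omega)) hζ
  have h2 : ∑ i ∈ Ico d D, (b i - q i) * c ≤ ∑ i ∈ Ico d D, (b i - q i) * Wfun q b D i := by
    apply Finset.sum_le_sum
    intro i hi
    rw [Finset.mem_Ico] at hi
    have hζ : b i - q i ≤ 0 := by
      rw [hz2 i hi.1 hi.2]
      exact neg_nonpos.mpr (hζ0 _ (Finset.mem_Icc.mpr ⟨by omega, by omega⟩))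
    exact mul_le_mul_of_nonpos_left (hWanti d i (by omega) (by omega)) hζ
  have e1 : ∑ i ∈ Ico 0 d, (b i - q i) * c = (∑ i ∈ Finset.Icc 1 d, ζ i) * c := by
    rw [Finset.sum_mul, ← Finset.Ico_add_one_right_eq_Icc, Finset.sum_Ico_eq_sum_range,
      Finset.sum_Ico_eq_sum_range]
    have hd1 : d + 1 - 1 = d := by omega
    have hd2 : d - 0 = d := by omega
    rw [hd1, hd2]
    apply Finset.sum_congr rfl
    intro i hi
    rw [Finset.mem_range] at hi
    rw [Nat.zero_add, hz1 i hi]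
  have e2 : ∑ i ∈ Ico d D, (b i - q i) * c = -((∑ j ∈ Finset.Icc (d+1) D, ζ j) * c) := by
    rw [Finset.sum_mul, ← Finset.Ico_add_one_right_eq_Icc, Finset.sum_Ico_eq_sum_range,
      Finset.sum_Ico_eq_sum_range, ← Finset.sum_neg_distrib]
    have hDd : D + 1 - (d + 1) = D - d := by omega
    rw [hDd]
    apply Finset.sum_congr rfl
    intro i hi
    rw [Finset.mem_range] at hi
    rw [hz2 (d + i) (by omega) (by omega)]
    have h' : 1 + (d + i) = d + 1 + i := by omega
    rw [h']; ring
  have hzero : ∑ i ∈ Ico 0 d, (b i - q i) * c + ∑ i ∈ Ico d D, (b i - q i) * c = 0 := by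
    rw [e1, e2, hsum]; ring
  linarith [h1, h2]
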